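/- For q₀ ∈ (0, 1/4) and all η ∈ [π/4, π/2], one has sin(η)/η − q₀·η·sin(η)/(q₀²+η²) − q₀²·cos(η)/(q₀²+η²) ≥ 1/π. -/

import Mathlib

open Real Set

theorem pointwise_lower_bound (q : ℝ) (hq : q ∈ Set.Ioo (0 : ℝ) (1 / 4)) :
    ∀ η ∈ Set.Icc (π / 4) (π / 2),
      Real.sin η / η - q * η * Real.sin η / (q ^ 2 + η ^ 2)
        - q ^ 2 * Real.cos η / (q ^ 2 + η ^ 2) ≥ 1 / π := by
  obtain ⟨hq0, hq1⟩ := hq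
  rintro η ⟨h1, h2⟩
  have hπ : (3 : ℝ) < π := Real.pi_gt_three
  have hη0 : 0 < η := by linarith
  have hs : 2 / π * η ≤ Real.sin η := Real.mul_le_sin (by linarith) h2
  have hc0 : 0 ≤ Real.cos η := Real.cos_nonneg_of_mem_Icc ⟨by linarith, h2⟩
  have hc1 : Real.cos η ≤ 1 := Real.cos_le_one η
  have hd : 0 < q ^ 2 + η ^ 2 := by positivity
  have hπ0 : 0 < π := by linarith
  have key : Real.sin η / η - q * η * Real.sin η / (q ^ 2 + η ^ 2)
        - q ^ 2 * Real.cos η / (q ^ 2 + η ^ 2) - 1 / π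
      = (π * Real.sin η * (q ^ 2 + η ^ 2) - π * q * η ^ 2 * Real.sin η
          - π * q ^ 2 * η * Real.cos η - η * (q ^ 2 + η ^ 2))
        / (π * η * (q ^ 2 + η ^ 2)) := by
    field_simp
  have hnum : 0 ≤ π * Real.sin η * (q ^ 2 + η ^ 2) - π * q * η ^ 2 * Real.sin η
      - π * q ^ 2 * η * Real.cos η - η * (q ^ 2 + η ^ 2) := by
    have hcoef : 0 < q ^ 2 + η ^ 2 - q * η ^ 2 := by nlinarith
    have hstep : 2 * η * (q ^ 2 + η ^ 2 - q * η ^ 2)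
        ≤ π * Real.sin η * (q ^ 2 + η ^ 2 - q * η ^ 2) := by
      have : 2 * η ≤ π * Real.sin η := by
        have := mul_le_mul_of_nonneg_left hs (le_of_lt hπ0)
        calc 2 * η = π * (2 / π * η) := by field_simp
        _ ≤ π * Real.sin η := this
      exact mul_le_mul_of_nonneg_right this (le_of_lt hcoef)
    have h315 : π < 3.15 := by
      have := Real.pi_lt_d2
      linarith
    have hq2 : q ^ 2 ≤ 1 / 16 := by nlinarith
    have hη2sq : 9 / 16 < η ^ 2 := by nlinarith
    have hA : π * Real.cos η ≤ 3.15 := by nlinarith [hc0, hc1]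
    have hB : π * q ^ 2 * Real.cos η ≤ 3.15 * q ^ 2 := by
      have := mul_le_mul_of_nonneg_left hA (sq_nonneg q)
      nlinarith [this]
    have h2q : 2 * q * η ^ 2 ≤ (1 / 2) * η ^ 2 := by nlinarith [sq_nonneg η]
    have hinner : 0 ≤ q ^ 2 + η ^ 2 - 2 * q * η ^ 2 - π * q ^ 2 * Real.cos η := by
      linarith [hq2, hη2sq, hB, h2q]
    have hid : π * Real.sin η * (q ^ 2 + η ^ 2) - π * q * η ^ 2 * Real.sin η
        - π * q ^ 2 * η * Real.cos η - η * (q ^ 2 + η ^ 2)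
        = (π * Real.sin η * (q ^ 2 + η ^ 2 - q * η ^ 2)
            - 2 * η * (q ^ 2 + η ^ 2 - q * η ^ 2))
          + η * (q ^ 2 + η ^ 2 - 2 * q * η ^ 2 - π * q ^ 2 * Real.cos η) := by ring
    rw [hid]
    have h2' := mul_nonneg (le_of_lt hη0) hinner
    linarith
  have hden : 0 < π * η * (q ^ 2 + η ^ 2) := by positivity
  have := div_nonneg hnum (le_of_lt hden)
  rw [← key] at this
  linarith
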